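/- Let n ≥ 2 be an integer and a₀, a₁, …, a_n ≥ 0 be constants. Fix t ∈ [0,1) and real numbers f₁, f₂, g₁, g₂, and for τ ∈ [0,1] define the curve γ^τ : [0,2π] → ℝ² by γ^τ(θ) = ( (1−t)(θ−π) + τ f₁ + (1−τ) f₂ , τ g₁ + (1−τ) g₂ ). Then the vector field ∂_τ γ^τ = (f₁ − f₂, g₁ − g₂) is independent of θ and τ, D_s(∂_τ γ^τ) = 0 where D_s := ‖∂_θ γ^τ‖^{-1} ∂_θ, and the G-length of the homotopy satisfies ∫₀¹ ( Σ_{i=0}^{n} a_i ∫₀^{2π} ‖D_s^i (∂_τ γ^τ)(θ)‖² ‖∂_θ γ^τ(θ)‖ dθ )^{1/2} dτ = ( 2π a₀ (1−t) )^{1/2} ( (f₁ − f₂)² + (g₁ − g₂)² )^{1/2}. In particular, if f₁, f₂, g₁, g₂ are replaced by bounded functions of t, this quantity tends to 0 as t → 1⁻. -/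
import Mathlib


open Real MeasureTheory Set Filter

/-- The vector `(x, y)` in the Euclidean plane `ℝ²`. -/
noncomputable def vec2 (x y : ℝ) : EuclideanSpace ℝ (Fin 2) :=
  (WithLp.equiv 2 (Fin 2 → ℝ)).symm ![x, y]

/-- The arc-length derivative `D_s = ‖∂_θ c‖⁻¹ ∂_θ` along a plane curve `c`. -/
noncomputable def Ds (c : ℝ → EuclideanSpace ℝ (Fin 2)) (h : ℝ → EuclideanSpace ℝ (Fin 2)) :
    ℝ → EuclideanSpace ℝ (Fin 2) :=
  fun θ => ‖deriv c θ‖⁻¹ • deriv h θ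

/-- The affine homotopy `γ^τ(θ) = ((1−t)(θ−π) + τ f₁ + (1−τ) f₂, τ g₁ + (1−τ) g₂)`
between two shrinking straight-line curves. -/
noncomputable def affHomotopy (t f₁ f₂ g₁ g₂ τ : ℝ) : ℝ → EuclideanSpace ℝ (Fin 2) :=
  fun θ => vec2 ((1 - t) * (θ - π) + τ * f₁ + (1 - τ) * f₂) (τ * g₁ + (1 - τ) * g₂)

/-- The variation field `∂_τ γ^τ` of the affine homotopy. -/
noncomputable def affVar (t f₁ f₂ g₁ g₂ τ : ℝ) : ℝ → EuclideanSpace ℝ (Fin 2) :=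
  fun θ => deriv (fun τ' => affHomotopy t f₁ f₂ g₁ g₂ τ' θ) τ

/-- The `G`-length `∫₀¹ √(Σ_{i=0}^n a_i ∫₀^{2π} ‖D_s^i(∂_τ γ^τ)‖² ‖∂_θ γ^τ‖ dθ) dτ`
of the affine homotopy, for the constant-coefficient Sobolev metric of order `n`. -/
noncomputable def affHomotopyLength (n : ℕ) (a : ℕ → ℝ) (t f₁ f₂ g₁ g₂ : ℝ) : ℝ :=
  ∫ τ in (0:ℝ)..1, Real.sqrt (∑ i ∈ Finset.range (n + 1),
    a i * ∫ θ in (0:ℝ)..(2 * π),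
      ‖(Ds (affHomotopy t f₁ f₂ g₁ g₂ τ))^[i] (affVar t f₁ f₂ g₁ g₂ τ) θ‖ ^ 2 *
        ‖deriv (affHomotopy t f₁ f₂ g₁ g₂ τ) θ‖)

/- Auxiliary lemmas. -/

lemma vec2_add' (x y x' y' : ℝ) : vec2 x y + vec2 x' y' = vec2 (x+x') (y+y') := by
  ext i; fin_cases i <;> simp [vec2]

lemma vec2_smul' (r x y : ℝ) : r • vec2 x y = vec2 (r*x) (r*y) := by
  ext i; fin_cases i <;> simp [vec2]

lemma norm_vec2' (x y : ℝ) : ‖vec2 x y‖ = Real.sqrt (x^2 + y^2) := by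
  simp [vec2, EuclideanSpace.norm_eq, Fin.sum_univ_two, Real.norm_eq_abs, sq_abs]

lemma deriv_affine' (p v : EuclideanSpace ℝ (Fin 2)) (x : ℝ) :
    deriv (fun s : ℝ => p + s • v) x = v := by
  have h : HasDerivAt (fun s : ℝ => p + s • v) ((1:ℝ) • v) x :=
    (((hasDerivAt_id x).smul_const v)).const_add p
  simpa using h.deriv

lemma affVar_eq' (t f₁ f₂ g₁ g₂ τ θ : ℝ) :
    affVar t f₁ f₂ g₁ g₂ τ θ = vec2 (f₁ - f₂) (g₁ - g₂) := by
  have h : (fun τ' => affHomotopy t f₁ f₂ g₁ g₂ τ' θ) =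
      fun τ' => vec2 ((1 - t) * (θ - π) + f₂) g₂ + τ' • vec2 (f₁ - f₂) (g₁ - g₂) := by
    funext τ'
    rw [vec2_smul', vec2_add']
    unfold affHomotopy
    ring_nf
  rw [affVar, h, deriv_affine']

lemma deriv_affHomotopy' (t f₁ f₂ g₁ g₂ τ θ : ℝ) :
    deriv (affHomotopy t f₁ f₂ g₁ g₂ τ) θ = vec2 (1 - t) 0 := by
  have h : affHomotopy t f₁ f₂ g₁ g₂ τ =
      fun θ' => vec2 ((1 - t) * (0 - π) + τ * f₁ + (1 - τ) * f₂) (τ * g₁ + (1 - τ) * g₂)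
        + θ' • vec2 (1 - t) 0 := by
    funext θ'
    rw [vec2_smul', vec2_add']
    unfold affHomotopy
    ring_nf
  rw [h, deriv_affine']

lemma Ds_affVar' (t f₁ f₂ g₁ g₂ τ θ : ℝ) :
    Ds (affHomotopy t f₁ f₂ g₁ g₂ τ) (affVar t f₁ f₂ g₁ g₂ τ) θ = 0 := by
  have h : affVar t f₁ f₂ g₁ g₂ τ = fun _ => vec2 (f₁ - f₂) (g₁ - g₂) :=
    funext fun θ' => affVar_eq' t f₁ f₂ g₁ g₂ τ θ'
  rw [Ds, h, deriv_const]
  simp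

lemma Ds_zero' (c : ℝ → EuclideanSpace ℝ (Fin 2)) :
    Ds c (fun _ => 0) = fun _ => 0 := by
  funext θ; rw [Ds, deriv_const]; simp

lemma iter_zero' (t f₁ f₂ g₁ g₂ τ : ℝ) {i : ℕ} (hi : 1 ≤ i) :
    (Ds (affHomotopy t f₁ f₂ g₁ g₂ τ))^[i] (affVar t f₁ f₂ g₁ g₂ τ) = fun _ => 0 := by
  induction i with
  | zero => omega
  | succ k ih =>
    rw [Function.iterate_succ_apply']
    rcases Nat.eq_or_lt_of_le hi with h | h
    · have : k = 0 := by omega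
      subst this
      simp only [Function.iterate_zero, id]
      exact funext fun θ => Ds_affVar' t f₁ f₂ g₁ g₂ τ θ
    · rw [ih (by omega), Ds_zero']

lemma length_formula' (n : ℕ) (a : ℕ → ℝ) (ha0 : 0 ≤ a 0) (t : ℝ) (ht1 : t ≤ 1)
    (f₁ f₂ g₁ g₂ : ℝ) :
    affHomotopyLength n a t f₁ f₂ g₁ g₂ =
      Real.sqrt (2 * π * a 0 * (1 - t)) * Real.sqrt ((f₁ - f₂) ^ 2 + (g₁ - g₂) ^ 2) := by
  have hnorm : ∀ τ θ : ℝ, ‖deriv (affHomotopy t f₁ f₂ g₁ g₂ τ) θ‖ = 1 - t := by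
    intro τ θ
    rw [deriv_affHomotopy', norm_vec2']
    simp [Real.sqrt_sq_eq_abs, abs_of_nonneg (by linarith : (0:ℝ) ≤ 1 - t)]
  have hsum : ∀ τ : ℝ, (∑ i ∈ Finset.range (n + 1),
      a i * ∫ θ in (0:ℝ)..(2 * π),
        ‖(Ds (affHomotopy t f₁ f₂ g₁ g₂ τ))^[i] (affVar t f₁ f₂ g₁ g₂ τ) θ‖ ^ 2 *
          ‖deriv (affHomotopy t f₁ f₂ g₁ g₂ τ) θ‖)
      = 2 * π * a 0 * (1 - t) * ((f₁ - f₂) ^ 2 + (g₁ - g₂) ^ 2) := by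
    intro τ
    rw [Finset.sum_eq_single_of_mem 0 (Finset.mem_range.mpr (Nat.succ_pos n))]
    · simp only [Function.iterate_zero, id]
      have : (fun θ => ‖affVar t f₁ f₂ g₁ g₂ τ θ‖ ^ 2 *
          ‖deriv (affHomotopy t f₁ f₂ g₁ g₂ τ) θ‖) =
          fun _ : ℝ => ((f₁ - f₂) ^ 2 + (g₁ - g₂) ^ 2) * (1 - t) := by
        funext θ
        rw [affVar_eq', hnorm, norm_vec2', Real.sq_sqrt (by positivity)]
      rw [this, intervalIntegral.integral_const]
      simp only [smul_eq_mul]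
      ring
    · intro i hi hne
      rw [iter_zero' t f₁ f₂ g₁ g₂ τ (Nat.one_le_iff_ne_zero.mpr hne)]
      simp
  unfold affHomotopyLength
  have : (fun τ : ℝ => Real.sqrt (∑ i ∈ Finset.range (n + 1),
      a i * ∫ θ in (0:ℝ)..(2 * π),
        ‖(Ds (affHomotopy t f₁ f₂ g₁ g₂ τ))^[i] (affVar t f₁ f₂ g₁ g₂ τ) θ‖ ^ 2 *
          ‖deriv (affHomotopy t f₁ f₂ g₁ g₂ τ) θ‖))
      = fun _ : ℝ => Real.sqrt (2 * π * a 0 * (1 - t)) *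
          Real.sqrt ((f₁ - f₂) ^ 2 + (g₁ - g₂) ^ 2) := by
    funext τ
    rw [hsum τ, Real.sqrt_mul (mul_nonneg (mul_nonneg (by positivity) ha0) (by linarith))]
  rw [this, intervalIntegral.integral_const]
  simp

/-- **The affine homotopy between shrinking lines has vanishing `G`-length as `t → 1⁻`.**
The variation field `∂_τ γ^τ = (f₁ − f₂, g₁ − g₂)` is constant, `D_s(∂_τ γ^τ) = 0`, the
`G`-length of the homotopy equals `√(2π a₀ (1−t)) √((f₁−f₂)² + (g₁−g₂)²)`, and in particular
for bounded functions of `t` this quantity tends to `0` as `t → 1⁻`. -/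
theorem affine_homotopy_length (n : ℕ) (hn : 2 ≤ n) (a : ℕ → ℝ) (ha : ∀ i, 0 ≤ a i)
    (t : ℝ) (ht0 : 0 ≤ t) (ht1 : t < 1) (f₁ f₂ g₁ g₂ : ℝ) :
    (∀ τ θ : ℝ, affVar t f₁ f₂ g₁ g₂ τ θ = vec2 (f₁ - f₂) (g₁ - g₂)) ∧
    (∀ τ θ : ℝ, Ds (affHomotopy t f₁ f₂ g₁ g₂ τ) (affVar t f₁ f₂ g₁ g₂ τ) θ = 0) ∧
    affHomotopyLength n a t f₁ f₂ g₁ g₂ =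
      Real.sqrt (2 * π * a 0 * (1 - t)) * Real.sqrt ((f₁ - f₂) ^ 2 + (g₁ - g₂) ^ 2) ∧
    (∀ F₁ F₂ G₁ G₂ : ℝ → ℝ,
      (∃ M : ℝ, ∀ s : ℝ, |F₁ s| ≤ M ∧ |F₂ s| ≤ M ∧ |G₁ s| ≤ M ∧ |G₂ s| ≤ M) →
      Tendsto (fun t' => affHomotopyLength n a t' (F₁ t') (F₂ t') (G₁ t') (G₂ t'))
        (nhdsWithin 1 (Iio 1)) (nhds 0)) := by
  refine ⟨fun τ θ => affVar_eq' t f₁ f₂ g₁ g₂ τ θ,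
    fun τ θ => Ds_affVar' t f₁ f₂ g₁ g₂ τ θ,
    length_formula' n a (ha 0) t ht1.le f₁ f₂ g₁ g₂, ?_⟩
  rintro F₁ F₂ G₁ G₂ ⟨M, hM⟩
  have hbound : Tendsto (fun t' : ℝ => Real.sqrt (2 * π * a 0 * (1 - t')) *
      Real.sqrt (8 * M ^ 2)) (nhdsWithin 1 (Iio 1)) (nhds 0) := by
    have hc : Continuous (fun t' : ℝ => Real.sqrt (2 * π * a 0 * (1 - t')) *
        Real.sqrt (8 * M ^ 2)) :=
      (Real.continuous_sqrt.comp (by continuity)).mul continuous_const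
    have := (hc.tendsto 1).mono_left (nhdsWithin_le_nhds (s := Iio 1))
    simpa using this
  apply squeeze_zero' ?_ ?_ hbound
  · filter_upwards [eventually_mem_nhdsWithin] with t' (ht' : t' ∈ Iio 1)
    rw [length_formula' n a (ha 0) t' (le_of_lt ht')]
    positivity
  · filter_upwards [eventually_mem_nhdsWithin] with t' (ht' : t' ∈ Iio 1)
    rw [length_formula' n a (ha 0) t' (le_of_lt ht')]
    apply mul_le_mul_of_nonneg_left _ (Real.sqrt_nonneg _)
    apply Real.sqrt_le_sqrt
    have h1 := hM t'
    have e1 := abs_le.mp h1.1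
    have e2 := abs_le.mp h1.2.1
    have e3 := abs_le.mp h1.2.2.1
    have e4 := abs_le.mp h1.2.2.2
    nlinarith [sq_nonneg (F₁ t' + F₂ t'), sq_nonneg (G₁ t' + G₂ t')]
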